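/- arXiv:2602.20729 — 2 statements merged into one kernel-verified Lean document; each statement's English description precedes it below -/
import Mathlib

section
/- Dual Choquet integral maximum representation: if m is a supermodular capacity on a nonempty finite set Ω with dual m'(A) = 1 − m(Ω \ A), then for every f : Ω → ℝ the discrete Choquet integral with respect to the dual satisfies (C)∫ f dm' = max_{P ∈ core(m)} E_P[f], i.e., there exists P* ∈ core(m) with E_{P*}[f] = (C)∫ f dm' and E_P[f] ≤ (C)∫ f dm' for every P ∈ core(m). -/
open Finset Filter

/-- A capacity on a finite type `Ω`: a normalized monotone set function. -/
def IsCapacity {Ω : Type*} [Fintype Ω] (m : Finset Ω → ℝ) : Prop :=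
  m ∅ = 0 ∧ m Finset.univ = 1 ∧ ∀ ⦃A B : Finset Ω⦄, A ⊆ B → m A ≤ m B

/-- The initial segment `{σ 0, …, σ (k-1)}` of an enumeration `σ` of `Ω`. -/
def prefSet {Ω : Type*} [Fintype Ω] [DecidableEq Ω]
    (σ : Fin (Fintype.card Ω) ≃ Ω) (k : ℕ) : Finset Ω :=
  (Finset.univ.filter fun j : Fin (Fintype.card Ω) => (j : ℕ) < k).image σ

/-- The Choquet sum of `f` against `m` along an enumeration `σ` of `Ω`. -/
def choquetSum {Ω : Type*} [Fintype Ω] [DecidableEq Ω]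
    (m : Finset Ω → ℝ) (f : Ω → ℝ) (σ : Fin (Fintype.card Ω) ≃ Ω) : ℝ :=
  ∑ i : Fin (Fintype.card Ω),
    f (σ i) * (m (prefSet σ ((i : ℕ) + 1)) - m (prefSet σ (i : ℕ)))

/-- An enumeration of `Ω` along which `f` is weakly decreasing. -/
noncomputable def sortedEquiv {Ω : Type*} [Fintype Ω] (f : Ω → ℝ) :
    Fin (Fintype.card Ω) ≃ Ω :=
  (Tuple.sort fun i => -f ((Fintype.equivFin Ω).symm i)).trans
    (Fintype.equivFin Ω).symm

/-- The discrete Choquet integral of `f` with respect to `m`. -/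
noncomputable def choquet {Ω : Type*} [Fintype Ω] [DecidableEq Ω]
    (m : Finset Ω → ℝ) (f : Ω → ℝ) : ℝ :=
  choquetSum m f (sortedEquiv f)

/-- The dual capacity `m'(A) = 1 - m(Ω \ A)`. -/
def dualCap {Ω : Type*} [Fintype Ω] [DecidableEq Ω]
    (m : Finset Ω → ℝ) (A : Finset Ω) : ℝ :=
  1 - m Aᶜ

/-- Supermodularity: `m(A ∪ B) + m(A ∩ B) ≥ m(A) + m(B)`. -/
def IsSupermodular {Ω : Type*} [DecidableEq Ω] (m : Finset Ω → ℝ) : Prop :=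
  ∀ A B : Finset Ω, m A + m B ≤ m (A ∪ B) + m (A ∩ B)

/-- Submodularity: `m(A ∪ B) + m(A ∩ B) ≤ m(A) + m(B)`. -/
def IsSubmodular {Ω : Type*} [DecidableEq Ω] (m : Finset Ω → ℝ) : Prop :=
  ∀ A B : Finset Ω, m (A ∪ B) + m (A ∩ B) ≤ m A + m B

/-- A probability vector on a finite type `Ω`. -/
def IsProbVector {Ω : Type*} [Fintype Ω] (P : Ω → ℝ) : Prop :=
  (∀ ω, 0 ≤ P ω) ∧ ∑ ω, P ω = 1

/-- Membership in the core of a capacity `m`. -/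
def memCore {Ω : Type*} [Fintype Ω] (m : Finset Ω → ℝ) (P : Ω → ℝ) : Prop :=
  IsProbVector P ∧ ∀ A : Finset Ω, m A ≤ ∑ ω ∈ A, P ω

/-- The λ-rule set function `m_λ(A) = (∏_{ω ∈ A} (1 + λ g(ω)) - 1) / λ`. -/
noncomputable def mLam {Ω : Type*} (lam : ℝ) (g : Ω → ℝ) (A : Finset Ω) : ℝ :=
  ((∏ ω ∈ A, (1 + lam * g ω)) - 1) / lam
section aux
variable {Ω : Type*} [Fintype Ω] [DecidableEq Ω] (σ : Fin (Fintype.card Ω) ≃ Ω)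

lemma prefSet_zero : prefSet σ 0 = ∅ := by simp [prefSet]

lemma prefSet_top : prefSet σ (Fintype.card Ω) = Finset.univ := by
  rw [prefSet, Finset.filter_true_of_mem (fun j _ => j.isLt)]
  exact Finset.image_univ_equiv σ

lemma prefSet_succ (k : ℕ) (hk : k < Fintype.card Ω) :
    prefSet σ (k+1) = insert (σ ⟨k, hk⟩) (prefSet σ k) := by
  unfold prefSet
  rw [← Finset.image_insert]
  congr 1
  ext j
  simp only [Finset.mem_filter, Finset.mem_insert, Finset.mem_univ, true_and, Fin.ext_iff]
  omega

lemma not_mem_prefSet (k : ℕ) (hk : k < Fintype.card Ω) :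
    σ ⟨k, hk⟩ ∉ prefSet σ k := by
  simp only [prefSet, Finset.mem_image, Finset.mem_filter, Finset.mem_univ, true_and]
  rintro ⟨j, hj, h⟩
  have hj' : j = ⟨k, hk⟩ := σ.injective h
  subst hj'
  simp at hj

lemma prefSet_mono {k l : ℕ} (h : k ≤ l) : prefSet σ k ⊆ prefSet σ l :=
  Finset.image_subset_image (Finset.monotone_filter_right _ (fun _ _ hj => lt_of_lt_of_le hj h))

end aux

/-- for supermodular capacities, the dual Choquet integral is the
maximum of expectations over the core, and the maximum is attained. -/
theorem choquet_dual_eq_max_core {Ω : Type*} [Fintype Ω] [DecidableEq Ω] [Nonempty Ω]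
    (m : Finset Ω → ℝ) (hm : IsCapacity m) (hsm : IsSupermodular m) (f : Ω → ℝ) :
    (∃ P : Ω → ℝ, memCore m P ∧ ∑ ω, P ω * f ω = choquet (dualCap m) f) ∧
    (∀ P : Ω → ℝ, memCore m P → ∑ ω, P ω * f ω ≤ choquet (dualCap m) f) := by
  classical
  set n := Fintype.card Ω with hn
  set σ := sortedEquiv f with hσ
  set m' : Finset Ω → ℝ := dualCap m with hm'def
  have hm'0 : m' ∅ = 0 := by simp [hm'def, dualCap, hm.2.1]
  have hm'1 : m' Finset.univ = 1 := by simp [hm'def, dualCap, hm.1]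
  have hm'mono : ∀ {A B : Finset Ω}, A ⊆ B → m' A ≤ m' B := by
    intro A B h
    have := hm.2.2 (Finset.compl_subset_compl.mpr h)
    simp only [hm'def, dualCap]
    linarith
  have hsub : IsSubmodular m' := by
    intro A B
    have h := hsm Aᶜ Bᶜ
    simp only [hm'def, dualCap, Finset.compl_union, Finset.compl_inter]
    linarith
  set P : Ω → ℝ := fun ω =>
    m' (prefSet σ (((σ.symm ω : Fin n) : ℕ) + 1)) - m' (prefSet σ ((σ.symm ω : Fin n) : ℕ))
    with hP
  have hPσ : ∀ i : Fin n, P (σ i) = m' (prefSet σ ((i : ℕ) + 1)) - m' (prefSet σ (i : ℕ)) := by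
    intro i; simp [hP]
  have hPnn : ∀ ω, 0 ≤ P ω := by
    intro ω
    simp only [hP]
    exact sub_nonneg.mpr (hm'mono (prefSet_mono σ (Nat.le_succ _)))
  have htel : ∀ k, k ≤ n → ∑ ω ∈ prefSet σ k, P ω = m' (prefSet σ k) := by
    intro k
    induction k with
    | zero => intro _; simp [prefSet_zero σ, hm'0]
    | succ k ih =>
      intro hk
      have hk' : k < n := hk
      rw [show prefSet σ (k+1) = insert (σ ⟨k, hk'⟩) (prefSet σ k) from prefSet_succ σ k hk',
        Finset.sum_insert (not_mem_prefSet σ k hk'), ih (le_of_lt hk'),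
        ← prefSet_succ σ k hk']
      have h1 : P (σ ⟨k, hk'⟩) = m' (prefSet σ (k + 1)) - m' (prefSet σ k) := hPσ ⟨k, hk'⟩
      rw [h1]; ring
  have hgreedy : ∀ B : Finset Ω, ∀ k, k ≤ n →
      ∑ ω ∈ prefSet σ k ∩ B, P ω ≤ m' (prefSet σ k ∩ B) := by
    intro B k
    induction k with
    | zero => intro _; simp [prefSet_zero σ, hm'0]
    | succ k ih =>
      intro hk
      have hk' : k < n := hk
      have ihk := ih (le_of_lt hk')
      by_cases hB : σ ⟨k, hk'⟩ ∈ B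
      · have hins : prefSet σ (k+1) ∩ B = insert (σ ⟨k, hk'⟩) (prefSet σ k ∩ B) := by
          rw [prefSet_succ σ k hk', Finset.insert_inter_of_mem hB]
        have hnm : σ ⟨k, hk'⟩ ∉ prefSet σ k ∩ B :=
          fun h => not_mem_prefSet σ k hk' (Finset.mem_of_mem_inter_left h)
        rw [hins, Finset.sum_insert hnm]
        have h1 : P (σ ⟨k, hk'⟩) = m' (prefSet σ (k + 1)) - m' (prefSet σ k) := hPσ ⟨k, hk'⟩
        have hsubm := hsub (prefSet σ k) (insert (σ ⟨k, hk'⟩) (prefSet σ k ∩ B))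
        have hu : prefSet σ k ∪ insert (σ ⟨k, hk'⟩) (prefSet σ k ∩ B) = prefSet σ (k+1) := by
          rw [Finset.union_insert, Finset.union_eq_left.mpr Finset.inter_subset_left,
            ← prefSet_succ σ k hk']
        have hi : prefSet σ k ∩ insert (σ ⟨k, hk'⟩) (prefSet σ k ∩ B) = prefSet σ k ∩ B := by
          rw [Finset.inter_insert_of_notMem (not_mem_prefSet σ k hk'), ← Finset.inter_assoc,
            Finset.inter_self]
        rw [hu, hi] at hsubm
        rw [h1]
        linarith
      · have heq : prefSet σ (k+1) ∩ B = prefSet σ k ∩ B := by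
          rw [prefSet_succ σ k hk', Finset.insert_inter_of_notMem hB]
        rw [heq]; exact ihk
  have hPsum : ∑ ω, P ω = 1 := by
    have h := htel n le_rfl
    rw [prefSet_top σ] at h
    rw [h, hm'1]
  have hQle : ∀ Q : Ω → ℝ, memCore m Q → ∀ A : Finset Ω, ∑ ω ∈ A, Q ω ≤ m' A := by
    intro Q hQ A
    have h1 := hQ.2 Aᶜ
    have h2 : ∑ ω ∈ A, Q ω + ∑ ω ∈ Aᶜ, Q ω = 1 := by
      rw [Finset.sum_add_sum_compl]; exact hQ.1.2
    have h3 : m' A = 1 - m Aᶜ := rfl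
    linarith
  have hPcore : memCore m P := by
    refine ⟨⟨hPnn, hPsum⟩, ?_⟩
    intro A
    have hg := hgreedy Aᶜ n le_rfl
    rw [prefSet_top σ, Finset.univ_inter] at hg
    have hsplit : ∑ ω ∈ A, P ω + ∑ ω ∈ Aᶜ, P ω = 1 := by
      rw [Finset.sum_add_sum_compl]; exact hPsum
    have hAc : m' Aᶜ = 1 - m A := by simp [hm'def, dualCap]
    linarith
  have hchoq : choquet m' f =
      ∑ i : Fin n, f (σ i) * (m' (prefSet σ ((i : ℕ) + 1)) - m' (prefSet σ (i : ℕ))) := rfl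
  have hEP : ∑ ω, P ω * f ω = choquet m' f := by
    rw [hchoq, ← Equiv.sum_comp σ (fun ω => P ω * f ω)]
    refine Finset.sum_congr rfl (fun i _ => ?_)
    rw [hPσ i]; ring
  refine ⟨⟨P, hPcore, hEP⟩, ?_⟩
  -- second part
  intro Q hQ
  have hn1 : 1 ≤ n := Fintype.card_pos
  have hanti : ∀ i j : Fin n, i ≤ j → f (σ j) ≤ f (σ i) := by
    intro i j hij
    have h := Tuple.monotone_sort (fun i => -f ((Fintype.equivFin Ω).symm i)) hij
    simp only [Function.comp_apply] at h
    have e1 : σ i = (Fintype.equivFin Ω).symm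
        ((Tuple.sort fun i => -f ((Fintype.equivFin Ω).symm i)) i) := by rw [hσ]; rfl
    have e2 : σ j = (Fintype.equivFin Ω).symm
        ((Tuple.sort fun i => -f ((Fintype.equivFin Ω).symm i)) j) := by rw [hσ]; rfl
    rw [← e1, ← e2] at h
    linarith
  set q : ℕ → ℝ := fun i => if h : i < n then Q (σ ⟨i, h⟩) else 0 with hq
  set a : ℕ → ℝ := fun i => if h : i < n then f (σ ⟨i, h⟩) else 0 with ha
  set x : ℕ → ℝ := fun i =>
    if h : i < n then m' (prefSet σ (i+1)) - m' (prefSet σ i) else 0 with hx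
  set d : ℕ → ℝ := fun i => x i - q i with hd
  have hDx : ∀ k, k ≤ n → ∑ i ∈ Finset.range k, x i = m' (prefSet σ k) := by
    intro k
    induction k with
    | zero => intro _; simp [prefSet_zero σ, hm'0]
    | succ k ih =>
      intro hk
      have hk' : k < n := hk
      rw [Finset.sum_range_succ, ih (le_of_lt hk')]
      have : x k = m' (prefSet σ (k+1)) - m' (prefSet σ k) := by
        simp only [hx]; rw [dif_pos hk']
      rw [this]; ring
  have hDq : ∀ k, k ≤ n → ∑ i ∈ Finset.range k, q i = ∑ ω ∈ prefSet σ k, Q ω := by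
    intro k
    induction k with
    | zero => intro _; simp [prefSet_zero σ]
    | succ k ih =>
      intro hk
      have hk' : k < n := hk
      rw [Finset.sum_range_succ, ih (le_of_lt hk'),
        show prefSet σ (k+1) = insert (σ ⟨k, hk'⟩) (prefSet σ k) from prefSet_succ σ k hk',
        Finset.sum_insert (not_mem_prefSet σ k hk')]
      have : q k = Q (σ ⟨k, hk'⟩) := by simp only [hq]; rw [dif_pos hk']
      rw [this]; ring
  have hD : ∀ k, k ≤ n → 0 ≤ ∑ i ∈ Finset.range k, d i := by
    intro k hk
    have heq : ∑ i ∈ Finset.range k, d i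
        = m' (prefSet σ k) - ∑ ω ∈ prefSet σ k, Q ω := by
      simp only [hd]
      rw [Finset.sum_sub_distrib, hDx k hk, hDq k hk]
    rw [heq]
    have := hQle Q hQ (prefSet σ k)
    linarith
  have hDn : ∑ i ∈ Finset.range n, d i = 0 := by
    simp only [hd]
    rw [Finset.sum_sub_distrib, hDx n le_rfl, hDq n le_rfl, prefSet_top σ, hm'1, hQ.1.2]
    ring
  have habel := Finset.sum_range_by_parts a d n
  rw [hDn, smul_zero, zero_sub] at habel
  have hge : 0 ≤ ∑ i ∈ Finset.range n, a i • d i := by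
    rw [habel]
    refine neg_nonneg.mpr (Finset.sum_nonpos ?_)
    intro i hi
    have hi1 : i + 1 < n := by have := Finset.mem_range.mp hi; omega
    have hi0 : i < n := lt_trans (Nat.lt_succ_self i) hi1
    have h1 : a (i+1) - a i ≤ 0 := by
      have hm := hanti ⟨i, hi0⟩ ⟨i+1, hi1⟩ (by simp [Fin.le_def])
      have ea1 : a (i+1) = f (σ ⟨i+1, hi1⟩) := by simp only [ha]; rw [dif_pos hi1]
      have ea0 : a i = f (σ ⟨i, hi0⟩) := by simp only [ha]; rw [dif_pos hi0]
      rw [ea1, ea0]; linarith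
    have h2 : 0 ≤ ∑ j ∈ Finset.range (i+1), d j := hD (i+1) (le_of_lt hi1)
    rw [smul_eq_mul]
    exact mul_nonpos_of_nonpos_of_nonneg h1 h2
  have hsum : ∑ i ∈ Finset.range n, a i • d i = choquet m' f - ∑ ω, Q ω * f ω := by
    rw [← Fin.sum_univ_eq_sum_range (fun i => a i • d i) n]
    have h3 : ∑ ω, Q ω * f ω = ∑ i : Fin n, Q (σ i) * f (σ i) :=
      (Equiv.sum_comp σ (fun ω => Q ω * f ω)).symm
    rw [hchoq, h3, ← Finset.sum_sub_distrib]
    refine Finset.sum_congr rfl (fun i _ => ?_)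
    simp only [ha, hq, hx, hd, smul_eq_mul, dif_pos i.isLt, Fin.eta]
    ring
  linarith
end

section
/- Convergence of fuzzy value iteration: let S and A be nonempty finite sets, γ ∈ [0,1), r : S × A → ℝ, π(·|s) a probability vector on A for each s ∈ S, and for each (s,a) let 𝒫(s,a) be a nonempty finite set of probability vectors on S equipped with a capacity m_{s,a}, and let F be the fuzzy Bellman operator F(V)(s) = Σ_{a∈A} π(a|s)·[ r(s,a) + γ·(C)∫_{𝒫(s,a)} (p ↦ Σ_{s'∈S} p(s') V(s')) dm_{s,a} ]. Then F has a unique fixed point V* : S → ℝ with F(V*) = V*, and for every initial V⁰ : S → ℝ the iterates Vⁿ⁺¹ = F(Vⁿ) satisfy max_{s∈S} |Vⁿ(s) − V*(s)| ≤ γⁿ · max_{s∈S} |V⁰(s) − V*(s)| for all n, so Vⁿ → V* as n → ∞. -/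
open Finset Filter

open MeasureTheory

lemma integral_eq_of_Ioo {g : ℝ → ℝ} {a b C : ℝ} (hab : a ≤ b)
    (h : ∀ t ∈ Set.Ioo a b, g t = C) : ∫ t in a..b, g t = (b - a) * C := by
  rw [intervalIntegral.integral_of_le hab, MeasureTheory.integral_Ioc_eq_integral_Ioo,
    MeasureTheory.setIntegral_congr_fun measurableSet_Ioo h,
    MeasureTheory.setIntegral_const, Real.volume_real_Ioo, max_eq_left (by linarith)]
  simp [mul_comm]

lemma integral_step {g : ℝ → ℝ} (hg : Antitone g) (w : ℕ → ℝ) (C : ℕ → ℝ) :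
    ∀ K, (∀ k, k < K → w k ≤ w (k+1)) →
      (∀ k, k < K → ∀ t ∈ Set.Ioo (w k) (w (k+1)), g t = C k) →
      ∫ t in (w 0)..(w K), g t = ∑ k ∈ Finset.range K, (w (k+1) - w k) * C k := by
  intro K
  induction K with
  | zero => intro _ _; simp
  | succ K ih =>
    intro hmono hC
    rw [← intervalIntegral.integral_add_adjacent_intervals
        (hg.intervalIntegrable (a := w 0) (b := w K))
        (hg.intervalIntegrable (a := w K) (b := w (K+1))),
      ih (fun k hk => hmono k (by omega)) (fun k hk => hC k (by omega)),
      Finset.sum_range_succ,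
      integral_eq_of_Ioo (hmono K (by omega)) (hC K (by omega))]

lemma abel_sum (V M : ℕ → ℝ) (n : ℕ) :
    ∑ i ∈ Finset.range (n+1), V i * (M (i+1) - M i)
      = V n * M (n+1) - V 0 * M 0 + ∑ j ∈ Finset.range n, (V j - V (j+1)) * M (j+1) := by
  induction n with
  | zero => simp; ring
  | succ n ih => rw [Finset.sum_range_succ, ih, Finset.sum_range_succ]; ring

open MeasureTheory

lemma mem_prefSet {Ω : Type*} [Fintype Ω] [DecidableEq Ω]
    (σ : Fin (Fintype.card Ω) ≃ Ω) (k : ℕ) (ω : Ω) :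
    ω ∈ prefSet σ k ↔ ((σ.symm ω : Fin (Fintype.card Ω)) : ℕ) < k := by
  simp only [prefSet, Finset.mem_image, Finset.mem_filter, Finset.mem_univ, true_and]
  constructor
  · rintro ⟨j, hj, rfl⟩; simpa using hj
  · intro h; exact ⟨σ.symm ω, h, by simp⟩

lemma prefSet_zero_s16 {Ω : Type*} [Fintype Ω] [DecidableEq Ω]
    (σ : Fin (Fintype.card Ω) ≃ Ω) : prefSet σ 0 = ∅ := by
  ext ω; simp [mem_prefSet]

lemma prefSet_card {Ω : Type*} [Fintype Ω] [DecidableEq Ω]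
    (σ : Fin (Fintype.card Ω) ≃ Ω) : prefSet σ (Fintype.card Ω) = Finset.univ := by
  ext ω; simp [mem_prefSet, Fin.is_lt]

lemma antitone_sortedEquiv {Ω : Type*} [Fintype Ω] (f : Ω → ℝ) :
    Antitone (fun i => f (sortedEquiv f i)) := by
  have h := Tuple.monotone_sort (fun i => -f ((Fintype.equivFin Ω).symm i))
  intro i j hij
  have := h hij
  simp only [Function.comp, sortedEquiv, Equiv.trans_apply] at this ⊢
  linarith

lemma choquet_repr {Ω : Type*} [Fintype Ω] [DecidableEq Ω] [Nonempty Ω]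
    (m : Finset Ω → ℝ) (hm : IsCapacity m) (f : Ω → ℝ) (c M₀ : ℝ)
    (hc : ∀ ω, c ≤ f ω) (hM : ∀ ω, f ω ≤ M₀) :
    choquet m f = c + ∫ t in c..M₀, m (Finset.univ.filter fun ω => t < f ω) := by
  set n := Fintype.card Ω with hn'
  have hn : 0 < n := Fintype.card_pos
  obtain ⟨n', hnn'⟩ : ∃ n', n = n' + 1 := ⟨n - 1, by omega⟩
  set σ := sortedEquiv f with hσ
  have hanti : Antitone (fun i : Fin n => f (σ i)) := antitone_sortedEquiv f
  have fσ_le : ∀ (a b : ℕ) (ha : a < n) (hb : b < n), a ≤ b →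
      f (σ ⟨b, hb⟩) ≤ f (σ ⟨a, ha⟩) := by
    intro a b ha hb h
    exact hanti (Fin.mk_le_mk.mpr h)
  set V : ℕ → ℝ := fun i => if h : i < n then f (σ ⟨i, h⟩) else 0 with hV
  have hVlt : ∀ (i : ℕ) (h : i < n), V i = f (σ ⟨i, h⟩) := by
    intro i h; simp only [hV]; rw [dif_pos h]
  have hVle : ∀ (a b : ℕ), a ≤ b → b < n → V b ≤ V a := by
    intro a b hab hbn
    rw [hVlt a (by omega), hVlt b hbn]
    exact fσ_le _ _ _ _ hab
  set w : ℕ → ℝ := fun k =>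
    if hk : k = 0 then c else if h : k ≤ n then V (n - k) else M₀ with hw
  have hw0 : w 0 = c := by simp only [hw, dif_pos rfl]
  have hwk : ∀ (k : ℕ) (h1 : 1 ≤ k) (h2 : k ≤ n), w k = V (n - k) := by
    intro k h1 h2
    simp only [hw]
    rw [dif_neg (by omega : ¬ k = 0), dif_pos h2]
  have hwtop : ∀ (k : ℕ), n < k → w k = M₀ := by
    intro k h
    simp only [hw]
    rw [dif_neg (by omega : ¬ k = 0), dif_neg (by omega : ¬ k ≤ n)]
  set G : ℝ → ℝ := fun t => m (Finset.univ.filter fun ω => t < f ω) with hG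
  have hGanti : Antitone G := by
    intro s t hst
    exact hm.2.2 (Finset.monotone_filter_right _ (fun ω _ h => lt_of_le_of_lt hst h))
  have hwmono : ∀ k, k < n + 1 → w k ≤ w (k + 1) := by
    intro k hk
    rcases Nat.eq_zero_or_pos k with rfl | hk1
    · rw [hw0, hwk 1 le_rfl hn, hVlt _ (by omega)]
      exact hc _
    · rcases Nat.lt_or_ge n (k+1) with h | h
      · rw [hwtop _ h, hwk k hk1 (by omega), hVlt _ (by omega)]
        exact hM _
      · rw [hwk k hk1 (by omega), hwk (k+1) (by omega) h]
        exact hVle _ _ (by omega) (by omega)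
  have hpiece : ∀ k, k < n + 1 → ∀ t ∈ Set.Ioo (w k) (w (k+1)),
      G t = m (prefSet σ (n - k)) := by
    intro k hk t ht
    have hfilter : (Finset.univ.filter fun ω => t < f ω) = prefSet σ (n - k) := by
      ext ω
      simp only [Finset.mem_filter, Finset.mem_univ, true_and, mem_prefSet]
      constructor
      · intro htf
        by_contra hge
        push_neg at hge
        have hlt := (σ.symm ω).isLt
        have hk1 : 1 ≤ k := by omega
        have h1 : f ω ≤ w k := by
          rw [hwk k hk1 (by omega), hVlt _ (by omega)]
          have h2 := fσ_le (n - k) (σ.symm ω) (by omega) (by omega) (by omega)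
          calc f ω = f (σ (σ.symm ω)) := by rw [Equiv.apply_symm_apply]
          _ = f (σ ⟨(σ.symm ω : ℕ), by omega⟩) := by rw [Fin.eta]
          _ ≤ _ := h2
        have := ht.1; linarith
      · intro hlt
        have hlt2 := (σ.symm ω).isLt
        have hkn : k + 1 ≤ n := by omega
        have h2 : w (k+1) ≤ f ω := by
          rw [hwk (k+1) (by omega) hkn, hVlt _ (by omega)]
          have h3 := fσ_le (σ.symm ω) (n - (k+1)) (by omega) (by omega) (by omega)
          calc f (σ ⟨n - (k+1), by omega⟩) ≤ f (σ ⟨(σ.symm ω : ℕ), by omega⟩) := h3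
          _ = f ω := by rw [Fin.eta, Equiv.apply_symm_apply]
        have := ht.2; linarith
    exact congrArg m hfilter
  set Mm : ℕ → ℝ := fun j => m (prefSet σ j) with hMm
  have hMm0 : Mm 0 = 0 := by
    simp only [hMm]
    rw [prefSet_zero_s16]; exact hm.1
  have hMmn : ∀ (j : ℕ), n ≤ j → Mm j = 1 := by
    intro j hj
    have hpn : prefSet σ j = Finset.univ := by
      ext ω
      simp only [mem_prefSet, Finset.mem_univ, iff_true]
      have := (σ.symm ω).isLt
      omega
    simp only [hMm]
    rw [hpn]; exact hm.2.1
  have hint : ∫ t in c..M₀, G t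
      = ∑ k ∈ Finset.range (n+1), (w (k+1) - w k) * Mm (n - k) := by
    rw [← hw0, ← hwtop (n+1) (by omega)]
    exact integral_step hGanti w _ (n+1) hwmono hpiece
  have hreflect : ∑ k ∈ Finset.range (n+1), (w (k+1) - w k) * Mm (n - k)
      = ∑ j ∈ Finset.range (n+1), (w (n - j + 1) - w (n - j)) * Mm j := by
    rw [← Finset.sum_range_reflect (fun k => (w (k+1) - w k) * Mm (n - k)) (n+1)]
    apply Finset.sum_congr rfl
    intro j hj
    simp only [Finset.mem_range] at hj
    have e1 : n + 1 - 1 - j = n - j := by omega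
    rw [e1]
    have e2 : n - (n - j) = j := by omega
    rw [e2]
  have hpeel : ∑ j ∈ Finset.range (n+1), (w (n - j + 1) - w (n - j)) * Mm j
      = (V (n-1) - c) + ∑ j ∈ Finset.range n', (V j - V (j+1)) * Mm (j+1) := by
    rw [Finset.sum_range_succ]
    have e3 : (w (n - n + 1) - w (n - n)) * Mm n = V (n - 1) - c := by
      have e4 : n - n = 0 := by omega
      rw [e4, zero_add, hw0, hwk 1 le_rfl hn, hMmn n le_rfl, mul_one]
    rw [e3]
    have e5 : ∑ j ∈ Finset.range n, (w (n - j + 1) - w (n - j)) * Mm j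
        = ∑ j ∈ Finset.range n', (V j - V (j+1)) * Mm (j+1) := by
      rw [hnn', Finset.sum_range_succ']
      simp only [Nat.sub_zero, hMm0, mul_zero, add_zero]
      apply Finset.sum_congr rfl
      intro j hj
      simp only [Finset.mem_range] at hj
      have e8 : n' + 1 - (j+1) + 1 = n' + 1 - j := by omega
      rw [e8, hwk (n' + 1 - j) (by omega) (by omega),
        hwk (n' + 1 - (j+1)) (by omega) (by omega)]
      have e9 : n - (n' + 1 - j) = j := by omega
      have e10 : n - (n' + 1 - (j+1)) = j + 1 := by omega
      rw [e9, e10]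
    rw [e5]
    ring
  have hconv : choquet m f = ∑ i ∈ Finset.range n, V i * (Mm (i+1) - Mm i) := by
    rw [choquet, ← hσ, choquetSum,
      ← Fin.sum_univ_eq_sum_range (fun i => V i * (Mm (i+1) - Mm i)) n]
    apply Finset.sum_congr rfl
    intro i _
    rw [hVlt _ i.isLt, Fin.eta]
  rw [hconv, hint, hreflect, hpeel]
  have habel := abel_sum V Mm n'
  rw [hnn', habel, hMm0, hMmn (n'+1) (by omega), mul_zero, mul_one, sub_zero]
  have e11 : n' + 1 - 1 = n' := by omega
  rw [e11]
  ring

lemma choquet_le_add {Ω : Type*} [Fintype Ω] [DecidableEq Ω] [Nonempty Ω]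
    (m : Finset Ω → ℝ) (hm : IsCapacity m) (f g : Ω → ℝ) (ε : ℝ) (hε : 0 ≤ ε)
    (h : ∀ ω, f ω ≤ g ω + ε) : choquet m f ≤ choquet m g + ε := by
  obtain ⟨ω₀⟩ := ‹Nonempty Ω›
  set c : ℝ := min (Finset.univ.inf' Finset.univ_nonempty f)
    (Finset.univ.inf' Finset.univ_nonempty g + ε) with hc
  set M₀ : ℝ := max (Finset.univ.sup' Finset.univ_nonempty f)
    (Finset.univ.sup' Finset.univ_nonempty g + ε) with hM₀
  have hcf : ∀ ω, c ≤ f ω := fun ω =>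
    (min_le_left _ _).trans (Finset.inf'_le _ (Finset.mem_univ ω))
  have hMf : ∀ ω, f ω ≤ M₀ := fun ω =>
    (Finset.le_sup' _ (Finset.mem_univ ω)).trans (le_max_left _ _)
  have hcg : ∀ ω, c - ε ≤ g ω := by
    intro ω
    have h1 : c ≤ Finset.univ.inf' Finset.univ_nonempty g + ε := min_le_right _ _
    have h2 : Finset.univ.inf' Finset.univ_nonempty g ≤ g ω :=
      Finset.inf'_le _ (Finset.mem_univ ω)
    linarith
  have hMg : ∀ ω, g ω ≤ M₀ - ε := by
    intro ω
    have h1 : Finset.univ.sup' Finset.univ_nonempty g + ε ≤ M₀ := le_max_right _ _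
    have h2 : g ω ≤ Finset.univ.sup' Finset.univ_nonempty g :=
      Finset.le_sup' _ (Finset.mem_univ ω)
    linarith
  have hcM : c ≤ M₀ := (hcf ω₀).trans (hMf ω₀)
  rw [choquet_repr m hm f c M₀ hcf hMf, choquet_repr m hm g (c-ε) (M₀-ε) hcg hMg]
  have hsub : ∫ t in (c-ε)..(M₀-ε), m (Finset.univ.filter fun ω => t < g ω)
      = ∫ t in c..M₀, m (Finset.univ.filter fun ω => t - ε < g ω) := by
    rw [intervalIntegral.integral_comp_sub_right
      (fun t => m (Finset.univ.filter fun ω => t < g ω)) ε]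
  rw [hsub]
  have hanti1 : Antitone (fun t => m (Finset.univ.filter fun ω => t < f ω)) := by
    intro s t hst
    exact hm.2.2 (Finset.monotone_filter_right _ (fun ω _ hω => lt_of_le_of_lt hst hω))
  have hanti2 : Antitone (fun t => m (Finset.univ.filter fun ω => t - ε < g ω)) := by
    intro s t hst
    exact hm.2.2 (Finset.monotone_filter_right _
      (fun ω _ hω => lt_of_le_of_lt (by linarith) hω))
  have hmono : ∫ t in c..M₀, m (Finset.univ.filter fun ω => t < f ω)
      ≤ ∫ t in c..M₀, m (Finset.univ.filter fun ω => t - ε < g ω) := by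
    apply intervalIntegral.integral_mono_on hcM
      hanti1.intervalIntegrable hanti2.intervalIntegrable
    intro t _
    apply hm.2.2
    apply Finset.monotone_filter_right
    intro ω _ hω
    have := h ω
    linarith
  linarith

/-- the fuzzy Bellman operator has a unique fixed point and value
iteration converges to it geometrically. -/
theorem fuzzy_value_iteration_converges
    {S A : Type*} [Fintype S] [Nonempty S] [Fintype A] [Nonempty A]
    (γ : ℝ) (hγ0 : 0 ≤ γ) (hγ1 : γ < 1)
    (r : S → A → ℝ)
    (pol : S → A → ℝ) (hpol : ∀ s, IsProbVector (pol s))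
    (P : S → A → Type*) [∀ s a, Fintype (P s a)] [∀ s a, DecidableEq (P s a)]
    [∀ s a, Nonempty (P s a)]
    (p : ∀ s a, P s a → S → ℝ) (hp : ∀ s a k, IsProbVector (p s a k))
    (m : ∀ s a, Finset (P s a) → ℝ) (hm : ∀ s a, IsCapacity (m s a))
    (F : (S → ℝ) → (S → ℝ))
    (hF : ∀ V s, F V s =
      ∑ a, pol s a *
        (r s a + γ * choquet (m s a) (fun k => ∑ s', p s a k s' * V s'))) :
    ∃ Vstar : S → ℝ, F Vstar = Vstar ∧ (∀ W : S → ℝ, F W = W → W = Vstar) ∧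
      ∀ V0 : S → ℝ,
        (∀ n : ℕ,
          (Finset.univ.sup' Finset.univ_nonempty fun s => |F^[n] V0 s - Vstar s|) ≤
            γ ^ n * Finset.univ.sup' Finset.univ_nonempty fun s => |V0 s - Vstar s|) ∧
        (∀ s, Filter.Tendsto (fun n : ℕ => F^[n] V0 s) Filter.atTop (nhds (Vstar s))) := by
  classical
  set D : (S → ℝ) → (S → ℝ) → ℝ :=
    fun V W => Finset.univ.sup' Finset.univ_nonempty fun s => |V s - W s| with hD
  have hDpt : ∀ V W s, |V s - W s| ≤ D V W := by
    intro V W s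
    simp only [hD]
    exact Finset.le_sup' (fun s => |V s - W s|) (Finset.mem_univ s)
  have hDle : ∀ X Y B, (∀ s, |X s - Y s| ≤ B) → D X Y ≤ B := by
    intro X Y B h
    simp only [hD]
    exact Finset.sup'_le _ _ (fun s _ => h s)
  have hD0 : ∀ V W, 0 ≤ D V W :=
    fun V W => le_trans (abs_nonneg _) (hDpt V W (Classical.arbitrary S))
  have key : ∀ V W s, |F V s - F W s| ≤ γ * D V W := by
    intro V W s
    rw [hF V s, hF W s, ← Finset.sum_sub_distrib]
    refine (Finset.abs_sum_le_sum_abs _ _).trans ?_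
    have hbound : ∀ a ∈ (Finset.univ : Finset A),
        |pol s a * (r s a + γ * choquet (m s a) (fun k => ∑ s', p s a k s' * V s'))
          - pol s a * (r s a + γ * choquet (m s a) (fun k => ∑ s', p s a k s' * W s'))|
        ≤ pol s a * (γ * D V W) := by
      intro a _
      have hle : ∀ (X Y : S → ℝ), ∀ k : P s a,
          (∑ s', p s a k s' * X s') ≤ (∑ s', p s a k s' * Y s') + D X Y := by
        intro X Y k
        calc ∑ s', p s a k s' * X s'
            ≤ ∑ s', (p s a k s' * Y s' + p s a k s' * D X Y) := by
              apply Finset.sum_le_sum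
              intro s' _
              have h1 := mul_le_mul_of_nonneg_left
                (le_trans (le_abs_self (X s' - Y s')) (hDpt X Y s')) ((hp s a k).1 s')
              nlinarith
          _ = (∑ s', p s a k s' * Y s') + ∑ s', p s a k s' * D X Y :=
              Finset.sum_add_distrib
          _ = (∑ s', p s a k s' * Y s') + D X Y := by
              rw [← Finset.sum_mul, (hp s a k).2, one_mul]
      have hDsymm : D W V = D V W := by
        simp only [hD]
        congr 1
        ext s'
        rw [abs_sub_comm]
      have hcd : |choquet (m s a) (fun k => ∑ s', p s a k s' * V s')
          - choquet (m s a) (fun k => ∑ s', p s a k s' * W s')| ≤ D V W := by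
        rw [abs_sub_le_iff]
        constructor
        · have := choquet_le_add (m s a) (hm s a) _ _ (D V W) (hD0 V W) (hle V W)
          linarith
        · have := choquet_le_add (m s a) (hm s a) _ _ (D W V) (hD0 W V) (hle W V)
          rw [hDsymm] at this
          linarith
      have e : pol s a * (r s a + γ * choquet (m s a) (fun k => ∑ s', p s a k s' * V s'))
          - pol s a * (r s a + γ * choquet (m s a) (fun k => ∑ s', p s a k s' * W s'))
          = pol s a * (γ * (choquet (m s a) (fun k => ∑ s', p s a k s' * V s')
            - choquet (m s a) (fun k => ∑ s', p s a k s' * W s'))) := by ring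
      rw [e, abs_mul, abs_of_nonneg ((hpol s).1 a), abs_mul, abs_of_nonneg hγ0]
      exact mul_le_mul_of_nonneg_left
        (mul_le_mul_of_nonneg_left hcd hγ0) ((hpol s).1 a)
    calc ∑ a, |pol s a * (r s a + γ * choquet (m s a) (fun k => ∑ s', p s a k s' * V s'))
          - pol s a * (r s a + γ * choquet (m s a) (fun k => ∑ s', p s a k s' * W s'))|
        ≤ ∑ a, pol s a * (γ * D V W) := Finset.sum_le_sum hbound
      _ = γ * D V W := by rw [← Finset.sum_mul, (hpol s).2, one_mul]
  set K : NNReal := ⟨γ, hγ0⟩ with hK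
  have hLip : LipschitzWith K F := by
    apply LipschitzWith.of_dist_le_mul
    intro V W
    rw [dist_pi_le_iff (by positivity)]
    intro s
    rw [Real.dist_eq]
    calc |F V s - F W s| ≤ γ * D V W := key V W s
      _ ≤ γ * dist V W := by
          apply mul_le_mul_of_nonneg_left _ hγ0
          apply Finset.sup'_le
          intro s' _
          rw [← Real.dist_eq]
          exact dist_le_pi_dist V W s'
  have hcontr : ContractingWith K F := ⟨by exact_mod_cast hγ1, hLip⟩
  refine ⟨ContractingWith.fixedPoint F hcontr, hcontr.fixedPoint_isFixedPt, ?_, ?_⟩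
  · intro W hW
    exact hcontr.fixedPoint_unique hW
  · intro V0
    set Vstar := ContractingWith.fixedPoint F hcontr with hVs
    have hfix : F Vstar = Vstar := hcontr.fixedPoint_isFixedPt
    have hiter : ∀ n : ℕ, D (F^[n] V0) Vstar ≤ γ ^ n * D V0 Vstar := by
      intro n
      induction n with
      | zero => simp
      | succ n ih =>
        apply hDle
        intro s
        rw [Function.iterate_succ_apply']
        calc |F (F^[n] V0) s - Vstar s| = |F (F^[n] V0) s - F Vstar s| := by
              rw [hfix]
          _ ≤ γ * D (F^[n] V0) Vstar := key _ _ s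
          _ ≤ γ * (γ ^ n * D V0 Vstar) := mul_le_mul_of_nonneg_left ih hγ0
          _ = γ ^ (n+1) * D V0 Vstar := by ring
    constructor
    · intro n
      have h2 := hiter n
      simp only [hD] at h2
      exact h2
    intro s
    rw [tendsto_iff_dist_tendsto_zero]
    apply squeeze_zero (fun n => dist_nonneg)
      (g := fun n => γ ^ n * D V0 Vstar)
      (fun n => by
        rw [Real.dist_eq]
        exact le_trans (hDpt (F^[n] V0) Vstar s) (hiter n))
    have h0 := tendsto_pow_atTop_nhds_zero_of_lt_one hγ0 hγ1
    simpa using h0.mul_const (D V0 Vstar)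
end
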